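/- Let F_d be the free group freely generated by the set S = {x₁, …, x_d}, and let Φ_d be the automorphism of F_d sending x₁ to x₁ and x_i to x_i x_{i-1}^{-1} for 2 ≤ i ≤ d. Then for every i with 1 ≤ i ≤ d and every positive integer n, the word length of Φ_d^n(x_i) with respect to S satisfies |Φ_d^n(x_i)|_S ≤ 2 n^{i-1}. -/

import Mathlib

/-- The word length of `g` with respect to a set `S` of letters. -/
noncomputable def wordLength {G : Type*} [Group G] (S : Set G) (g : G) : ℕ :=
  sInf {n | ∃ l : List G, l.length = n ∧ (∀ x ∈ l, x ∈ S ∨ x⁻¹ ∈ S) ∧ l.prod = g}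

/-- The predecessor index (`0`-indexed version of `i ↦ i - 1`). -/
def fpred {d : ℕ} (i : Fin d) : Fin d :=
  ⟨i.val - 1, lt_of_le_of_lt (Nat.sub_le _ _) i.isLt⟩

section aux

variable {α : Type*}

abbrev Sgen (α : Type*) : Set (FreeGroup α) := Set.range FreeGroup.of

lemma exists_rep (g : FreeGroup α) :
    ∃ l : List (FreeGroup α), (∀ x ∈ l, x ∈ Sgen α ∨ x⁻¹ ∈ Sgen α) ∧ l.prod = g := by
  induction g using FreeGroup.induction_on with
  | C1 => exact ⟨[], by simp, by simp⟩
  | of x => exact ⟨[FreeGroup.of x], by simp [Sgen], by simp⟩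
  | inv_of x _ => exact ⟨[(FreeGroup.of x)⁻¹], by simp [Sgen], by simp⟩
  | mul x y hx hy =>
    obtain ⟨lx, hlx, hpx⟩ := hx
    obtain ⟨ly, hly, hpy⟩ := hy
    refine ⟨lx ++ ly, ?_, by simp [hpx, hpy]⟩
    intro z hz
    rcases List.mem_append.1 hz with h | h
    exacts [hlx z h, hly z h]

lemma wl_le (g : FreeGroup α) (l : List (FreeGroup α))
    (h1 : ∀ x ∈ l, x ∈ Sgen α ∨ x⁻¹ ∈ Sgen α) (h2 : l.prod = g) :
    wordLength (Sgen α) g ≤ l.length :=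
  Nat.sInf_le ⟨l, rfl, h1, h2⟩

lemma wl_mem (g : FreeGroup α) :
    ∃ l : List (FreeGroup α), l.length = wordLength (Sgen α) g ∧
      (∀ x ∈ l, x ∈ Sgen α ∨ x⁻¹ ∈ Sgen α) ∧ l.prod = g := by
  obtain ⟨l, h1, h2⟩ := exists_rep g
  have hne : {n | ∃ l : List (FreeGroup α), l.length = n ∧
      (∀ x ∈ l, x ∈ Sgen α ∨ x⁻¹ ∈ Sgen α) ∧ l.prod = g}.Nonempty :=
    ⟨l.length, l, rfl, h1, h2⟩
  exact Nat.sInf_mem hne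

lemma wl_mul (a b : FreeGroup α) :
    wordLength (Sgen α) (a * b) ≤ wordLength (Sgen α) a + wordLength (Sgen α) b := by
  obtain ⟨la, hla, ha1, ha2⟩ := wl_mem a
  obtain ⟨lb, hlb, hb1, hb2⟩ := wl_mem b
  calc wordLength (Sgen α) (a * b) ≤ (la ++ lb).length := by
        refine wl_le _ _ ?_ (by simp [ha2, hb2])
        intro z hz
        rcases List.mem_append.1 hz with h | h
        exacts [ha1 z h, hb1 z h]
    _ = _ := by simp [hla, hlb]

lemma wl_inv (a : FreeGroup α) :
    wordLength (Sgen α) a⁻¹ ≤ wordLength (Sgen α) a := by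
  obtain ⟨la, hla, ha1, ha2⟩ := wl_mem a
  have key : ∀ l : List (FreeGroup α), (l.reverse.map (·⁻¹)).prod = l.prod⁻¹ := by
    intro l
    rw [List.map_reverse]
    exact (List.prod_inv_reverse l).symm
  have h := wl_le a⁻¹ (la.reverse.map (·⁻¹)) ?_ (by rw [key, ha2])
  · simpa [hla] using h
  · intro z hz
    simp only [List.mem_map, List.mem_reverse] at hz
    obtain ⟨y, hy, rfl⟩ := hz
    rcases ha1 y hy with h | h
    · right; simpa using h
    · left; exact h

lemma wl_of (x : α) : wordLength (Sgen α) (FreeGroup.of x) ≤ 1 := by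
  simpa using wl_le (FreeGroup.of x) [FreeGroup.of x] (by simp [Sgen]) (by simp)

end aux

/-- With `x₁, …, x_d` indexed by `Fin d` (so `x_{i+1}` is `FreeGroup.of i`), if
`Φ` is the automorphism with `Φ(x₁) = x₁` and `Φ(x_i) = x_i x_{i-1}⁻¹` for `i ≥ 2`,
then `|Φ^n(x_i)|_S ≤ 2 n^{i-1}`. -/
theorem stmt10 (d : ℕ) (Φ : MulAut (FreeGroup (Fin d)))
    (hΦ : ∀ i : Fin d, Φ (FreeGroup.of i) =
      if i.val = 0 then FreeGroup.of i
      else FreeGroup.of i * (FreeGroup.of (fpred i))⁻¹) :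
    ∀ (i : Fin d) (n : ℕ), 0 < n →
      wordLength (Set.range (FreeGroup.of : Fin d → FreeGroup (Fin d)))
        ((Φ ^ n) (FreeGroup.of i)) ≤ 2 * n ^ i.val := by
  have key : ∀ j : ℕ, ∀ i : Fin d, i.val = j → ∀ n : ℕ, 0 < n →
      wordLength (Sgen (Fin d)) ((Φ ^ n) (FreeGroup.of i)) ≤ 2 * n ^ j := by
    intro j
    induction j with
    | zero =>
      intro i hi n hn
      have fix : ∀ m : ℕ, (Φ ^ m) (FreeGroup.of i) = FreeGroup.of i := by
        intro m
        induction m with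
        | zero => simp
        | succ m ih => rw [pow_succ, MulAut.mul_apply, hΦ i, if_pos hi, ih]
      rw [fix]
      simp only [pow_zero, mul_one]
      exact (wl_of i).trans one_le_two
    | succ j ih =>
      intro i hi n hn
      have hne : i.val ≠ 0 := by omega
      have hpred : (fpred i).val = j := by simp [fpred, hi]
      have step : ∀ m : ℕ, (Φ ^ (m + 1)) (FreeGroup.of i) =
          (Φ ^ m) (FreeGroup.of i) * ((Φ ^ m) (FreeGroup.of (fpred i)))⁻¹ := by
        intro m
        rw [pow_succ, MulAut.mul_apply, hΦ i, if_neg hne, map_mul, map_inv]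
      have main : ∀ m : ℕ,
          wordLength (Sgen (Fin d)) ((Φ ^ (m + 1)) (FreeGroup.of i)) ≤ 2 * (m + 1) ^ (j + 1) := by
        intro m
        induction m with
        | zero =>
          rw [step 0]
          simp only [pow_zero, MulAut.one_apply]
          calc wordLength (Sgen (Fin d)) (FreeGroup.of i * (FreeGroup.of (fpred i))⁻¹)
              ≤ wordLength (Sgen (Fin d)) (FreeGroup.of i) +
                wordLength (Sgen (Fin d)) (FreeGroup.of (fpred i))⁻¹ := wl_mul _ _
            _ ≤ 1 + 1 := add_le_add (wl_of i) ((wl_inv _).trans (wl_of _))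
            _ ≤ 2 * (0 + 1) ^ (j + 1) := by norm_num
        | succ m ihm =>
          have h2 := ih (fpred i) hpred (m + 1) (Nat.succ_pos m)
          rw [step (m + 1)]
          calc wordLength (Sgen (Fin d)) _
              ≤ wordLength (Sgen (Fin d)) ((Φ ^ (m + 1)) (FreeGroup.of i)) +
                wordLength (Sgen (Fin d)) (((Φ ^ (m + 1)) (FreeGroup.of (fpred i)))⁻¹) :=
                wl_mul _ _
            _ ≤ 2 * (m + 1) ^ (j + 1) + 2 * (m + 1) ^ j :=
                add_le_add ihm ((wl_inv _).trans h2)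
            _ ≤ 2 * (m + 1 + 1) ^ (j + 1) := by
                have h1 : (m + 1) ^ (j + 1) + (m + 1) ^ j ≤ (m + 1 + 1) ^ (j + 1) := by
                  calc (m + 1) ^ (j + 1) + (m + 1) ^ j = (m + 2) * (m + 1) ^ j := by ring
                    _ ≤ (m + 2) * (m + 2) ^ j :=
                        Nat.mul_le_mul_left _ (Nat.pow_le_pow_left (by omega) j)
                    _ = (m + 1 + 1) ^ (j + 1) := by ring
                omega
      obtain ⟨m, rfl⟩ : ∃ m, n = m + 1 := ⟨n - 1, by omega⟩
      exact main m
  intro i n hn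
  exact key i.val i rfl n hn
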